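/- Let p be a prime, K a finite extension of ℚ_p of degree d, α ∈ K with α ∉ O_K, and let β be a Galois conjugate of α (so f(α⁻¹) = f(β⁻¹) = 0 for the common characteristic polynomial f of α⁻¹). Let b_1, b_2 ∈ ℤ_p and, for ℓ ≥ 0, let M_ℓ be the ℤ_p-submodule of K spanned by b_1 α^{ℓ+1} + b_2 β^{ℓ+1}, …, b_1 α^{ℓ+d} + b_2 β^{ℓ+d}. Then b_1 α^ℓ + b_2 β^ℓ ∈ p·M_ℓ for every integer ℓ ≥ 0. -/

import Mathlib

open Polynomial Filter Metric

set_option linter.unusedSectionVars false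
set_option maxHeartbeats 1000000

section Helpers

variable {p : ℕ} [Fact p.Prime] {K : Type*} [Field K] [Algebra ℚ_[p] K]
  [FiniteDimensional ℚ_[p] K] [Algebra ℤ_[p] K] [IsScalarTower ℤ_[p] ℚ_[p] K]

variable {m : ℕ} (b : Module.Basis (Fin m) ℚ_[p] K)

private lemma norm_cont :
    Continuous fun v : Fin m → ℚ_[p] => Algebra.norm ℚ_[p] (b.equivFun.symm v) := by
  classical
  have h1 : Continuous fun v : Fin m → ℚ_[p] =>
      (Algebra.leftMulMatrix b) (b.equivFun.symm v) := by
    exact ((Algebra.leftMulMatrix b).toLinearMap.comp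
      (b.equivFun.symm : (Fin m → ℚ_[p]) →ₗ[ℚ_[p]] K)).continuous_of_finiteDimensional
  have h2 := h1.matrix_det
  convert h2 using 2 with v
  exact Algebra.norm_eq_matrix_det b _

private lemma no_small_seq (v : ℕ → (Fin m → ℚ_[p])) {ε C : ℝ} (hε : 0 < ε)
    (hlow : ∀ i, ε ≤ ‖v i‖) (hup : ∀ i, ‖v i‖ ≤ C)
    (hN : Tendsto (fun i => ‖Algebra.norm ℚ_[p] (b.equivFun.symm (v i))‖) atTop (nhds 0)) :
    False := by
  have hA : IsCompact (Metric.closedBall (0 : Fin m → ℚ_[p]) C ∩ {w | ε ≤ ‖w‖}) :=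
    (isCompact_closedBall _ _).inter_right (isClosed_le continuous_const continuous_norm)
  have hmem : ∀ i, v i ∈ Metric.closedBall (0 : Fin m → ℚ_[p]) C ∩ {w | ε ≤ ‖w‖} := by
    intro i
    exact ⟨mem_closedBall_zero_iff.2 (hup i), hlow i⟩
  obtain ⟨a, ha, φ, hφ, hconv⟩ := hA.tendsto_subseq hmem
  have hf : Continuous fun w : Fin m → ℚ_[p] => Algebra.norm ℚ_[p] (b.equivFun.symm w) :=
    norm_cont b
  have h1 : Tendsto (fun i => ‖Algebra.norm ℚ_[p] (b.equivFun.symm (v (φ i)))‖) atTop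
      (nhds ‖Algebra.norm ℚ_[p] (b.equivFun.symm a)‖) :=
    ((hf.tendsto a).comp hconv).norm
  have h2 : Tendsto (fun i => ‖Algebra.norm ℚ_[p] (b.equivFun.symm (v (φ i)))‖) atTop
      (nhds 0) := hN.comp hφ.tendsto_atTop
  have h3 : ‖Algebra.norm ℚ_[p] (b.equivFun.symm a)‖ = 0 := tendsto_nhds_unique h1 h2
  have h4 : Algebra.norm ℚ_[p] (b.equivFun.symm a) = 0 := by
    simpa using h3
  have h5 : b.equivFun.symm a = 0 := Algebra.norm_eq_zero_iff.1 h4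
  have h6 : a = 0 := b.equivFun.symm.injective (by rw [h5, map_zero])
  have := ha.2
  rw [h6] at this
  simp only [Set.mem_setOf_eq, norm_zero] at this
  linarith


private lemma powers_bounded {x : K} (hx : ‖Algebra.norm ℚ_[p] x‖ ≤ 1) :
    ∃ C : ℝ, ∀ k : ℕ, ‖b.equivFun (x ^ k)‖ ≤ C := by
  by_contra hcon
  push_neg at hcon
  have hd : 1 ≤ Module.finrank ℚ_[p] K := Module.finrank_pos
  have hp1 : (1:ℝ) < (p:ℝ) := by
    exact_mod_cast (Fact.out : p.Prime).one_lt
  have hsel : ∀ i : ℕ, ∃ k : ℕ, ((p:ℝ))^i < ‖b.equivFun (x ^ k)‖ := fun i => hcon _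
  choose k hk using hsel
  have hne : Nonempty (Fin m) := b.index_nonempty
  -- for each i pick the coordinate achieving the sup norm
  have hcoord : ∀ i : ℕ, ∃ j : Fin m, ‖b.equivFun (x ^ k i)‖ = ‖b.equivFun (x ^ k i) j‖ := by
    intro i
    obtain ⟨j, _, hj⟩ := Finset.exists_mem_eq_sup (Finset.univ : Finset (Fin m))
      ⟨hne.some, Finset.mem_univ _⟩ (fun j => ‖b.equivFun (x ^ k i) j‖₊)
    exact ⟨j, by rw [Pi.norm_def, hj]; rfl⟩
  choose j hj using hcoord
  set c : ℕ → ℚ_[p] := fun i => (b.equivFun (x ^ k i) (j i))⁻¹ with hc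
  have hwpos : ∀ i, (0:ℝ) < ‖b.equivFun (x ^ k i)‖ := by
    intro i
    exact lt_of_le_of_lt (by positivity) (hk i)
  have hcnorm : ∀ i, ‖c i‖ = ‖b.equivFun (x ^ k i)‖⁻¹ := by
    intro i; rw [hc]; rw [norm_inv, hj i]
  set v : ℕ → (Fin m → ℚ_[p]) := fun i => c i • b.equivFun (x ^ k i) with hv
  have hvnorm : ∀ i, ‖v i‖ = 1 := by
    intro i
    rw [hv]
    simp only [norm_smul, hcnorm i]
    rw [inv_mul_cancel₀ (hwpos i).ne']
  -- the norms tend to zero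
  have hNval : ∀ i, ‖Algebra.norm ℚ_[p] (b.equivFun.symm (v i))‖
      ≤ ((p:ℝ)⁻¹) ^ i := by
    intro i
    have hsy : b.equivFun.symm (v i) = c i • x ^ k i := by
      rw [hv]; simp only [map_smul, LinearEquiv.symm_apply_apply]
    rw [hsy, Algebra.smul_def, map_mul, Algebra.norm_algebraMap, map_pow]
    rw [norm_mul, norm_pow, norm_pow]
    have h1 : ‖c i‖ ≤ (p:ℝ)⁻¹ ^ i := by
      rw [hcnorm i]
      rw [inv_pow]
      exact inv_anti₀ (by positivity) (le_of_lt (hk i))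
    have h2 : ‖c i‖ ^ Module.finrank ℚ_[p] K ≤ ‖c i‖ := by
      have hle1 : ‖c i‖ ≤ 1 := by
        refine h1.trans ?_
        rw [inv_pow]
        refine inv_le_one_of_one_le₀ (one_le_pow₀ (le_of_lt hp1))
      exact pow_le_of_le_one (norm_nonneg _) hle1 (by omega)
    calc ‖c i‖ ^ Module.finrank ℚ_[p] K * ‖Algebra.norm ℚ_[p] x‖ ^ k i
        ≤ ‖c i‖ ^ Module.finrank ℚ_[p] K * 1 := by
          refine mul_le_mul_of_nonneg_left ?_ (by positivity)
          exact pow_le_one₀ (norm_nonneg _) hx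
      _ ≤ (p:ℝ)⁻¹ ^ i := by rw [mul_one]; exact h2.trans h1
  have hN : Tendsto (fun i => ‖Algebra.norm ℚ_[p] (b.equivFun.symm (v i))‖) atTop (nhds 0) := by
    refine squeeze_zero (fun i => norm_nonneg _) hNval ?_
    exact tendsto_pow_atTop_nhds_zero_of_lt_one (by positivity)
      (inv_lt_one_of_one_lt₀ hp1)
  exact no_small_seq b v one_pos (fun i => (hvnorm i).ge) (fun i => (hvnorm i).le) hN


private lemma isIntegral_of_bounded {x : K} {C : ℝ}
    (hC : ∀ k : ℕ, ‖b.equivFun (x ^ k)‖ ≤ C) : IsIntegral ℤ_[p] x := by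
  have hp1 : (1:ℝ) < (p:ℝ) := by exact_mod_cast (Fact.out : p.Prime).one_lt
  obtain ⟨M, hM⟩ := pow_unbounded_of_one_lt C hp1
  set L : Submodule ℤ_[p] K :=
    Submodule.span ℤ_[p] (Set.range fun j : Fin m => (((p:ℚ_[p]))^M)⁻¹ • b j) with hL
  have hpow : ∀ k : ℕ, x ^ k ∈ L := by
    intro k
    have hrepr : x ^ k = ∑ j : Fin m, b.equivFun (x ^ k) j • b j := (b.sum_equivFun _).symm
    rw [hrepr]
    refine Submodule.sum_mem _ fun j _ => ?_
    have hcj : ‖b.equivFun (x ^ k) j * (p:ℚ_[p])^M‖ ≤ 1 := by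
      rw [norm_mul, norm_pow, Padic.norm_p]
      have h1 : ‖b.equivFun (x ^ k) j‖ ≤ C := (norm_le_pi_norm _ j).trans (hC k)
      calc ‖b.equivFun (x ^ k) j‖ * ((p:ℝ))⁻¹ ^ M
          ≤ (p:ℝ)^M * ((p:ℝ))⁻¹ ^ M := by
            refine mul_le_mul_of_nonneg_right (h1.trans hM.le) (by positivity)
        _ = 1 := by
            rw [inv_pow, mul_inv_cancel₀ (by positivity)]
    set z : ℤ_[p] := ⟨b.equivFun (x ^ k) j * (p:ℚ_[p])^M, hcj⟩ with hz
    have : b.equivFun (x ^ k) j • b j = z • ((((p:ℚ_[p]))^M)⁻¹ • b j) := by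
      rw [← IsScalarTower.algebraMap_smul ℚ_[p] z, smul_smul]
      congr 1
      have hzc : (algebraMap ℤ_[p] ℚ_[p] z) = b.equivFun (x ^ k) j * (p:ℚ_[p])^M := rfl
      rw [hzc, mul_assoc, mul_inv_cancel₀ (pow_ne_zero _ (Nat.cast_ne_zero.2 (Fact.out : p.Prime).ne_zero)), mul_one]
    rw [this]
    exact Submodule.smul_mem _ _ (Submodule.subset_span ⟨j, rfl⟩)
  -- the subalgebra generated by x is contained in L
  have hS : ∀ z ∈ Algebra.adjoin ℤ_[p] {x}, z ∈ L := by
    intro z hz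
    rw [Algebra.adjoin_singleton_eq_range_aeval] at hz
    obtain ⟨q, rfl⟩ := hz
    show (aeval x) q ∈ L
    rw [aeval_eq_sum_range (p := q) x]
    exact Submodule.sum_mem _ fun i _ => Submodule.smul_mem _ _ (hpow i)
  have hLfg : L.FG := Submodule.fg_span (Set.finite_range _)
  haveI := isNoetherian_of_fg_of_noetherian L hLfg
  set T := Subalgebra.toSubmodule (Algebra.adjoin ℤ_[p] {x}) with hT
  have hTL : T ≤ L := fun z hz => hS z hz
  have hTfg : T.FG := by
    have h1 : (T.comap L.subtype).FG := IsNoetherian.noetherian _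
    have h2 : Submodule.map L.subtype (T.comap L.subtype) = T := by
      rw [Submodule.map_comap_subtype]
      exact inf_eq_right.2 hTL
    rw [← h2]
    exact h1.map _
  exact IsIntegral.of_mem_of_fg _ hTfg x (Algebra.self_mem_adjoin_singleton _ _)


private lemma tendsto_pow_zero {x : K} (hx : ‖Algebra.norm ℚ_[p] x‖ < 1)
    (hC : ∃ C : ℝ, ∀ k : ℕ, ‖b.equivFun (x ^ k)‖ ≤ C) :
    Tendsto (fun k : ℕ => b.equivFun (x ^ k)) atTop (nhds 0) := by
  rcases eq_or_ne x 0 with rfl | hx0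
  · refine Tendsto.congr' ?_ tendsto_const_nhds
    filter_upwards [eventually_ge_atTop 1] with k hk
    rw [zero_pow (by omega)]
    simp
  obtain ⟨C, hCb⟩ := hC
  by_contra hcon
  rw [Metric.tendsto_atTop] at hcon
  push_neg at hcon
  obtain ⟨ε, hε, hsel⟩ := hcon
  choose k hk hdist using hsel
  refine no_small_seq b (fun i => b.equivFun (x ^ k i)) hε ?_ (fun i => hCb _) ?_
  · intro i
    have := hdist i
    rwa [dist_zero_right] at this
  · have hxn : Algebra.norm ℚ_[p] x ≠ 0 := by
      rw [ne_eq, Algebra.norm_eq_zero_iff]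
      exact hx0
    have hb : ∀ i : ℕ, ‖Algebra.norm ℚ_[p] (b.equivFun.symm (b.equivFun (x ^ k i)))‖
        ≤ ‖Algebra.norm ℚ_[p] x‖ ^ i := by
      intro i
      rw [LinearEquiv.symm_apply_apply, map_pow, norm_pow]
      exact pow_le_pow_of_le_one (norm_nonneg _) hx.le (hk i)
    refine squeeze_zero (fun i => norm_nonneg _) hb ?_
    exact tendsto_pow_atTop_nhds_zero_of_lt_one (norm_nonneg _) hx


end Helpers

section Core

variable {p : ℕ} [Fact p.Prime] {K : Type*} [Field K] [Algebra ℚ_[p] K]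
  [FiniteDimensional ℚ_[p] K] [Algebra ℤ_[p] K] [IsScalarTower ℤ_[p] ℚ_[p] K]

private lemma core_poly {α : K} (hα : ¬ IsIntegral ℤ_[p] α) :
    ∃ P : ℤ_[p][X], P.Monic ∧ 1 ≤ P.natDegree ∧ P.natDegree ≤ Module.finrank ℚ_[p] K ∧
      (∀ i < P.natDegree, P.coeff i ∈ Ideal.span {(p : ℤ_[p])}) ∧
      aeval α⁻¹ P = 0 := by
  classical
  haveI : Module.IsTorsionFree ℤ_[p] K := by
    refine Module.isTorsionFree_iff_algebraMap_injective.2 ?_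
    rw [IsScalarTower.algebraMap_eq ℤ_[p] ℚ_[p] K]
    exact (algebraMap ℚ_[p] K).injective.comp (IsFractionRing.injective ℤ_[p] ℚ_[p])
  have hα0 : α ≠ 0 := fun h => hα (h ▸ isIntegral_zero)
  set b : Module.Basis (Fin (Module.finrank ℚ_[p] K)) ℚ_[p] K := Module.finBasis ℚ_[p] K with hb
  have hNα : ¬ ‖Algebra.norm ℚ_[p] α‖ ≤ 1 := by
    intro h
    obtain ⟨Cb, hCb⟩ := powers_bounded b h
    exact hα (isIntegral_of_bounded b hCb)
  push_neg at hNα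
  set γ : K := α⁻¹ with hγdef
  have hmulN : Algebra.norm ℚ_[p] γ * Algebra.norm ℚ_[p] α = 1 := by
    rw [← map_mul, hγdef, inv_mul_cancel₀ hα0, map_one]
  have hNγ : ‖Algebra.norm ℚ_[p] γ‖ < 1 := by
    have h1 : ‖Algebra.norm ℚ_[p] γ‖ * ‖Algebra.norm ℚ_[p] α‖ = 1 := by
      rw [← norm_mul, hmulN, norm_one]
    nlinarith [norm_nonneg (Algebra.norm ℚ_[p] γ)]
  have hbdd := powers_bounded b hNγ.le
  obtain ⟨Cb, hC⟩ := hbdd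
  have hγint : IsIntegral ℤ_[p] γ := isIntegral_of_bounded b hC
  set P : ℤ_[p][X] := minpoly ℤ_[p] γ with hP
  have hPm : P.Monic := minpoly.monic hγint
  have hfield : minpoly ℚ_[p] γ = P.map (algebraMap ℤ_[p] ℚ_[p]) :=
    minpoly.isIntegrallyClosed_eq_field_fractions' ℚ_[p] hγint
  have hndeg : (minpoly ℚ_[p] γ).natDegree = P.natDegree := by
    rw [hfield]; exact hPm.natDegree_map _
  have hn1 : 1 ≤ P.natDegree := minpoly.natDegree_pos hγint
  have hnd : P.natDegree ≤ Module.finrank ℚ_[p] K := hndeg ▸ minpoly.natDegree_le γ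
  set n : ℕ := (minpoly ℚ_[p] γ).natDegree with hn
  -- linear independence of low powers of γ
  have li : LinearIndependent ℚ_[p] fun i : Fin n => γ ^ (i : ℕ) := linearIndependent_pow γ
  set wi : Fin n → (Fin (Module.finrank ℚ_[p] K) → ℚ_[p]) :=
    fun i => b.equivFun (γ ^ (i : ℕ)) with hwi
  have liV : LinearIndependent ℚ_[p] wi := by
    have := li.map' (b.equivFun : K ≃ₗ[ℚ_[p]] _).toLinearMap
      (LinearMap.ker_eq_bot_of_injective b.equivFun.injective)
    exact this
  set Wsp : Submodule ℚ_[p] (Fin (Module.finrank ℚ_[p] K) → ℚ_[p]) :=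
    Submodule.span ℚ_[p] (Set.range wi) with hWsp
  haveI : FiniteDimensional ℚ_[p] ↥Wsp := FiniteDimensional.span_of_finite _ (Set.finite_range wi)
  set BW : Module.Basis (Fin n) ℚ_[p] ↥Wsp := Module.Basis.span liV with hBW
  have hKγ : IsIntegral ℚ_[p] γ := Algebra.IsIntegral.isIntegral γ
  have hsp : Submodule.span ℚ_[p] (Set.range fun i : Fin n => γ ^ (i : ℕ))
      = Subalgebra.toSubmodule (Algebra.adjoin ℚ_[p] {γ}) := by
    rw [← Submodule.span_range_natDegree_eq_adjoin (minpoly.monic hKγ) (minpoly.aeval _ _)]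
    congr 1
    ext z
    simp only [Finset.coe_image, Finset.coe_range, Set.mem_image, Set.mem_Iio, Set.mem_range]
    constructor
    · rintro ⟨i, hi⟩; exact ⟨(i : ℕ), i.2, hi⟩
    · rintro ⟨i, hi, hz⟩; exact ⟨⟨i, hi⟩, hz⟩
  have hmemK : ∀ k : ℕ, γ ^ k ∈ Submodule.span ℚ_[p] (Set.range fun i : Fin n => γ ^ (i : ℕ)) := by
    intro k
    rw [hsp]
    exact Subalgebra.pow_mem _ (Algebra.self_mem_adjoin_singleton _ _) k
  have hmemV : ∀ k : ℕ, b.equivFun (γ ^ k) ∈ Wsp := by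
    intro k
    have hmap : Wsp = Submodule.map (b.equivFun : K →ₗ[ℚ_[p]] _)
        (Submodule.span ℚ_[p] (Set.range fun i : Fin n => γ ^ (i : ℕ))) := by
      rw [Submodule.map_span]
      congr 1
      rw [← Set.range_comp]
      rfl
    rw [hmap]
    exact Submodule.mem_map_of_mem (hmemK k)
  set u : ℕ → ↥Wsp := fun k => ⟨b.equivFun (γ ^ k), hmemV k⟩ with hu
  have hu0 : Tendsto u atTop (nhds 0) := by
    rw [Topology.IsEmbedding.subtypeVal.tendsto_nhds_iff]
    exact tendsto_pow_zero b hNγ ⟨Cb, hC⟩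
  have htend : ∀ i : Fin n, Tendsto (fun k => BW.repr (u k) i) atTop (nhds 0) := by
    intro i
    have hcont : Continuous (BW.coord i) := (BW.coord i).continuous_of_finiteDimensional
    have h2 := (hcont.tendsto 0).comp hu0
    have h0 : (BW.coord i) (0 : ↥Wsp) = 0 := map_zero _
    rw [h0] at h2
    exact h2.congr fun k => by rw [Function.comp_apply, Module.Basis.coord_apply]
  have hp0 : (0:ℝ) < (p:ℝ)⁻¹ := by
    have : (1:ℝ) < (p:ℝ) := by exact_mod_cast (Fact.out : p.Prime).one_lt
    positivity
  have hev : ∀ᶠ k in atTop, ∀ i : Fin n, ‖BW.repr (u k) i‖ < (p:ℝ)⁻¹ := by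
    rw [eventually_all]
    intro i
    exact NormedAddCommGroup.tendsto_nhds_zero.mp (htend i) _ hp0
  obtain ⟨k, hk⟩ := hev.exists
  -- representation of γ ^ k with small coefficients
  have hrep : γ ^ k = ∑ i : Fin n, BW.repr (u k) i • γ ^ (i : ℕ) := by
    have h1 : ∑ i : Fin n, BW.repr (u k) i • BW i = u k := BW.sum_repr (u k)
    have h2 : ((∑ i : Fin n, BW.repr (u k) i • BW i : ↥Wsp) : Fin (Module.finrank ℚ_[p] K) → ℚ_[p])
        = ∑ i : Fin n, BW.repr (u k) i • wi i := by
      push_cast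
      refine Finset.sum_congr rfl fun i _ => ?_
      rw [hBW, Module.Basis.span_apply]
    have h3 : (∑ i : Fin n, BW.repr (u k) i • wi i) = b.equivFun (γ ^ k) := by
      rw [← h2, h1]
    have h4 := congrArg b.equivFun.symm h3
    rw [LinearEquiv.symm_apply_apply] at h4
    rw [← h4]
    rw [map_sum]
    refine Finset.sum_congr rfl fun i _ => ?_
    rw [map_smul, hwi, LinearEquiv.symm_apply_apply]
  -- turn the coefficients into elements of p ℤ_p
  have hle1 : ∀ i : Fin n, ‖BW.repr (u k) i‖ ≤ 1 := by
    intro i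
    refine (hk i).le.trans ?_
    rw [inv_le_one_iff₀]
    right
    exact_mod_cast Nat.one_le_iff_ne_zero.2 (Fact.out : p.Prime).ne_zero
  set z : Fin n → ℤ_[p] := fun i => ⟨BW.repr (u k) i, hle1 i⟩ with hz
  have hzsmall : ∀ i : Fin n, z i ∈ Ideal.span {(p : ℤ_[p])} := by
    intro i
    have h1 : ‖z i‖ ≤ (p:ℝ) ^ (-(1:ℕ):ℤ) := by
      have : ‖z i‖ = ‖BW.repr (u k) i‖ := rfl
      rw [this]
      refine (hk i).le.trans ?_
      norm_num
    have := (PadicInt.norm_le_pow_iff_mem_span_pow (z i) 1).1 h1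
    rwa [pow_one] at this
  have hzw : ∀ i : Fin n, ∃ w : ℤ_[p], w * p = z i := by
    intro i
    exact Ideal.mem_span_singleton'.1 (hzsmall i)
  choose w hw using hzw
  set q : ℤ_[p][X] := ∑ i : Fin n, C (w i) * X ^ (i : ℕ) with hq
  have haeq : aeval γ ((X : ℤ_[p][X]) ^ k - C (p : ℤ_[p]) * q) = 0 := by
    have h1 : aeval γ ((X : ℤ_[p][X]) ^ k) = γ ^ k := by
      rw [map_pow, aeval_X]
    have h2 : aeval γ (C (p : ℤ_[p]) * q) = ∑ i : Fin n, algebraMap ℤ_[p] K (w i * p) * γ ^ (i:ℕ) := by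
      rw [map_mul, aeval_C, hq, map_sum, Finset.mul_sum]
      refine Finset.sum_congr rfl fun i _ => ?_
      rw [map_mul, aeval_C, map_pow, aeval_X, map_mul]
      ring
    rw [map_sub, h1, h2, hrep]
    rw [sub_eq_zero]
    refine Finset.sum_congr rfl fun i _ => ?_
    rw [hw i, Algebra.smul_def]
    congr 1
    rw [IsScalarTower.algebraMap_apply ℤ_[p] ℚ_[p] K]
    rfl
  have hdvd : P ∣ (X : ℤ_[p][X]) ^ k - C (p : ℤ_[p]) * q :=
    minpoly.isIntegrallyClosed_dvd hγint haeq
  -- reduce mod p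
  set φ : ℤ_[p] →+* ZMod p := PadicInt.toZMod with hφ
  have hdvd2 : P.map φ ∣ (X : (ZMod p)[X]) ^ k := by
    have h1 := Polynomial.map_dvd φ hdvd
    rwa [Polynomial.map_sub, Polynomial.map_pow, map_X, Polynomial.map_mul, map_C,
      show φ (p : ℤ_[p]) = 0 by rw [map_natCast]; exact ZMod.natCast_self p,
      map_zero, zero_mul, sub_zero] at h1
  have hPbarm : (P.map φ).Monic := hPm.map φ
  obtain ⟨i, hik, hassoc⟩ := (dvd_prime_pow Polynomial.prime_X k).1 hdvd2
  have hPbar : P.map φ = X ^ i :=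
    eq_of_monic_of_associated hPbarm (monic_X_pow _) hassoc
  have hideg : i = P.natDegree := by
    have h1 : (P.map φ).natDegree = P.natDegree := hPm.natDegree_map φ
    rw [hPbar] at h1
    rwa [natDegree_X_pow] at h1
  refine ⟨P, hPm, hn1, hnd, ?_, minpoly.aeval _ _⟩
  intro j hj
  have h1 : φ (P.coeff j) = 0 := by
    have h2 : (P.map φ).coeff j = φ (P.coeff j) := coeff_map φ j
    rw [hPbar, hideg] at h2
    rw [← h2, coeff_X_pow]
    simp [Nat.ne_of_lt hj]
  have h3 : P.coeff j ∈ RingHom.ker φ := h1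
  rwa [hφ, PadicInt.ker_toZMod, PadicInt.maximalIdeal_eq_span_p] at h3


end Core

/-- With `K` a finite extension of `ℚ_p` of degree `d`, `α ∈ K` not integral over
`ℤ_p`, `β = σ(α)` a Galois conjugate, `b₁, b₂ ∈ ℤ_p`, and `M ℓ` the
`ℤ_p`-submodule of `K` spanned by `b₁ α^{ℓ+1} + b₂ β^{ℓ+1}, …, b₁ α^{ℓ+d} + b₂ β^{ℓ+d}`,
one has `b₁ α^ℓ + b₂ β^ℓ ∈ p · M ℓ` for every `ℓ ≥ 0`. -/
theorem module_step (p : ℕ) [Fact p.Prime]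
    (K : Type*) [Field K] [Algebra ℚ_[p] K] [FiniteDimensional ℚ_[p] K]
    [Algebra ℤ_[p] K] [IsScalarTower ℤ_[p] ℚ_[p] K]
    (d : ℕ) (hd : d = Module.finrank ℚ_[p] K)
    (α : K) (hα : ¬ IsIntegral ℤ_[p] α) (σ : K ≃ₐ[ℚ_[p]] K) (β : K) (hβ : β = σ α)
    (b₁ b₂ : ℤ_[p])
    (M : ℕ → Submodule ℤ_[p] K)
    (hM : ∀ ℓ, M ℓ = Submodule.span ℤ_[p]
      ((fun i : ℕ => b₁ • α ^ (ℓ + i) + b₂ • β ^ (ℓ + i)) '' (Set.Icc 1 d))) :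
    ∀ ℓ : ℕ, b₁ • α ^ ℓ + b₂ • β ^ ℓ ∈ Ideal.span {(p : ℤ_[p])} • M ℓ := by
  intro ℓ
  obtain ⟨P, hPm, hn1, hnd', hcoeff, haev⟩ := core_poly hα
  have hnd : P.natDegree ≤ d := hd ▸ hnd'
  set n := P.natDegree with hn
  have hα0 : α ≠ 0 := fun h => hα (h ▸ isIntegral_zero)
  have hβ0 : β ≠ 0 := fun h => hα0 (σ.injective (by rw [← hβ, h, map_zero]))
  have haevβ : aeval β⁻¹ P = 0 := by
    have hσ : β⁻¹ = σ α⁻¹ := by rw [hβ, ← map_inv₀]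
    rw [hσ]
    have h1 := aeval_algHom_apply (AlgHom.restrictScalars ℤ_[p] σ.toAlgHom) α⁻¹ P
    have h2 : (AlgHom.restrictScalars ℤ_[p] σ.toAlgHom) α⁻¹ = σ α⁻¹ := rfl
    rw [h2] at h1
    rw [h1, haev, map_zero]
  have key : ∀ x : K, x ≠ 0 → aeval x⁻¹ P = 0 →
      ∑ i ∈ Finset.range (n + 1), P.coeff i • x ^ (ℓ + (n - i)) = 0 := by
    intro x hx h
    have h1 := congrArg (fun t : K => x ^ (ℓ + n) * t) h
    simp only [mul_zero] at h1
    rw [aeval_eq_sum_range, Finset.mul_sum] at h1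
    rw [← h1]
    refine Finset.sum_congr rfl fun i hi => ?_
    rw [Finset.mem_range] at hi
    have hin : i ≤ n := by omega
    rw [mul_smul_comm]
    congr 1
    have hsplit : x ^ (ℓ + n) = x ^ (ℓ + (n - i)) * x ^ i := by
      rw [← pow_add]; congr 1; omega
    rw [hsplit, inv_pow, mul_assoc, mul_inv_cancel₀ (pow_ne_zero _ hx), mul_one]
  have hsum : ∀ x : K, x ≠ 0 → aeval x⁻¹ P = 0 → ∀ bc : ℤ_[p],
      bc • x ^ ℓ = ∑ i ∈ Finset.range n, (-(P.coeff i)) • (bc • x ^ (ℓ + (n - i))) := by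
    intro x hx h bc
    have h1 := key x hx h
    rw [Finset.sum_range_succ] at h1
    rw [show P.coeff n = 1 from hPm.coeff_natDegree, Nat.sub_self, Nat.add_zero, one_smul] at h1
    have h2 : x ^ ℓ = -∑ i ∈ Finset.range n, P.coeff i • x ^ (ℓ + (n - i)) :=
      eq_neg_of_add_eq_zero_right h1
    have h3 : ∀ i ∈ Finset.range n, (-(P.coeff i)) • (bc • x ^ (ℓ + (n - i)))
        = -(bc • (P.coeff i • x ^ (ℓ + (n - i)))) := by
      intro i _
      rw [neg_smul, smul_comm]
    rw [Finset.sum_congr rfl h3, Finset.sum_neg_distrib, h2, smul_neg, Finset.smul_sum]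
  have hcomb : b₁ • α ^ ℓ + b₂ • β ^ ℓ
      = ∑ i ∈ Finset.range n,
          (-(P.coeff i)) • (b₁ • α ^ (ℓ + (n - i)) + b₂ • β ^ (ℓ + (n - i))) := by
    rw [hsum α hα0 haev b₁, hsum β hβ0 haevβ b₂, ← Finset.sum_add_distrib]
    refine Finset.sum_congr rfl fun i hi => ?_
    rw [smul_add]
  rw [hcomb, hM]
  refine Submodule.sum_mem _ fun i hi => ?_
  rw [Finset.mem_range] at hi
  refine Submodule.smul_mem_smul (neg_mem (hcoeff i hi)) ?_
  refine Submodule.subset_span ?_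
  exact ⟨n - i, Set.mem_Icc.2 ⟨by omega, by omega⟩, rfl⟩
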